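/- Let 𝔘 be a Banach algebra whose unitization 𝔘♯ is symmetrically pseudo-amenable with a symmetric approximate diagonal {t_λ}. Suppose X is a Banach 𝔘-bimodule such that for each x ∈ X the net {ψ_x(t_λ)} is bounded, and D : 𝔘 → X is a bounded Lie derivation such that {Φ_D(t_λ)} is bounded. Then there exist a bounded derivation d : 𝔘 → X and a bounded central trace τ : 𝔘 → Z_𝔘(X) with D = d + τ. -/

import Mathlib

open Filter Topology

universe u

/-- A realization of the projective Banach-space tensor square `A ⊗̂ A` of a (non-unital)
Banach algebra `A`, together with the canonical bimodule operations `a•t`, `t•a`, the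
"opposite" operations `a∘t`, `t∘a`, the product maps `π`, `π°` and the flip map, each
characterized by its values on elementary tensors.  The norm is the projective tensor norm:
`‖a ⊗ b‖ ≤ ‖a‖‖b‖` and every element is an absolutely convergent sum of elementary tensors
whose total norm is arbitrarily close to its norm; moreover bounded bilinear maps lift. -/
structure ProjTensorSquare (A : Type u) [NonUnitalNormedRing A] [NormedSpace ℂ A]
    [IsScalarTower ℂ A A] [SMulCommClass ℂ A A] [CompleteSpace A] where
  /-- the underlying Banach space of `A ⊗̂ A` -/
  T : Type u
  [nacg : NormedAddCommGroup T]
  [nsp : NormedSpace ℂ T]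
  [cplt : CompleteSpace T]
  /-- the canonical bilinear map `(a, b) ↦ a ⊗ b` -/
  tmul : A →L[ℂ] A →L[ℂ] T
  norm_tmul_le : ∀ a b : A, ‖tmul a b‖ ≤ ‖a‖ * ‖b‖
  /-- the projective norm property -/
  exists_rep : ∀ (t : T) (ε : ℝ), 0 < ε → ∃ u v : ℕ → A,
      Summable (fun n => ‖u n‖ * ‖v n‖) ∧ HasSum (fun n => tmul (u n) (v n)) t ∧
      ∑' n, ‖u n‖ * ‖v n‖ ≤ ‖t‖ + ε
  /-- the universal property: bounded bilinear maps into a Banach space lift to `T` -/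
  lift : ∀ {X : Type u} [NormedAddCommGroup X] [NormedSpace ℂ X] [CompleteSpace X]
      (f : A →L[ℂ] A →L[ℂ] X), ∃ g : T →L[ℂ] X, (∀ a b, g (tmul a b) = f a b) ∧ ‖g‖ ≤ ‖f‖
  /-- the left module action: `a • (b ⊗ c) = (a * b) ⊗ c` -/
  lmul : A → T →L[ℂ] T
  lmul_tmul : ∀ a b c, lmul a (tmul b c) = tmul (a * b) c
  /-- the right module action: `(b ⊗ c) • a = b ⊗ (c * a)` -/
  rmul : A → T →L[ℂ] T
  rmul_tmul : ∀ a b c, rmul a (tmul b c) = tmul b (c * a)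
  /-- the left opposite action: `a ∘ (b ⊗ c) = b ⊗ (a * c)` -/
  lcirc : A → T →L[ℂ] T
  lcirc_tmul : ∀ a b c, lcirc a (tmul b c) = tmul b (a * c)
  /-- the right opposite action: `(b ⊗ c) ∘ a = (b * a) ⊗ c` -/
  rcirc : A → T →L[ℂ] T
  rcirc_tmul : ∀ a b c, rcirc a (tmul b c) = tmul (b * a) c
  /-- the product map `π : b ⊗ c ↦ b * c` -/
  π : T →L[ℂ] A
  π_tmul : ∀ b c, π (tmul b c) = b * c
  /-- the opposite product map `π° : b ⊗ c ↦ c * b` -/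
  πop : T →L[ℂ] A
  πop_tmul : ∀ b c, πop (tmul b c) = c * b
  /-- the flip map `(b ⊗ c)° = c ⊗ b` -/
  flip : T →L[ℂ] T
  flip_tmul : ∀ b c, flip (tmul b c) = tmul c b

attribute [instance] ProjTensorSquare.nacg ProjTensorSquare.nsp ProjTensorSquare.cplt

namespace ProjTensorSquare

variable {A : Type u} [NonUnitalNormedRing A] [NormedSpace ℂ A]
    [IsScalarTower ℂ A A] [SMulCommClass ℂ A A] [CompleteSpace A]

/-- `t` is an approximate diagonal for `A` consisting of symmetric tensors, along the
filter `l`:  each `t i` is symmetric, `a • tᵢ - tᵢ • a → 0` and `π(tᵢ) a → a` for all `a`. -/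
def IsSymmApproxDiagonal (P : ProjTensorSquare A) {ι : Type u} (l : Filter ι)
    (t : ι → P.T) : Prop :=
  (∀ i, P.flip (t i) = t i) ∧
  (∀ a : A, Tendsto (fun i => P.lmul a (t i) - P.rmul a (t i)) l (𝓝 0)) ∧
  (∀ a : A, Tendsto (fun i => P.π (t i) * a) l (𝓝 a))

/-- A Banach algebra is symmetrically pseudo-amenable if it has a (not necessarily bounded)
approximate diagonal consisting of symmetric tensors. -/
def SymmPseudoAmenable (P : ProjTensorSquare A) : Prop :=
  ∃ (ι : Type u) (l : Filter ι) (t : ι → P.T), l.NeBot ∧ P.IsSymmApproxDiagonal l t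

end ProjTensorSquare

/-- A Banach `A`-bimodule: a Banach space with commuting bounded left and right `A`-actions. -/
structure BanachBimodule (A X : Type u) [NonUnitalNormedRing A] [NormedSpace ℂ A]
    [NormedAddCommGroup X] [NormedSpace ℂ X] where
  /-- the left action `(a, x) ↦ a • x` -/
  lsmul : A →L[ℂ] X →L[ℂ] X
  /-- the right action `(a, x) ↦ x • a` -/
  rsmul : A →L[ℂ] X →L[ℂ] X
  lsmul_mul : ∀ a b x, lsmul (a * b) x = lsmul a (lsmul b x)
  rsmul_mul : ∀ a b x, rsmul (a * b) x = rsmul b (rsmul a x)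
  lsmul_rsmul : ∀ a b x, lsmul a (rsmul b x) = rsmul b (lsmul a x)

namespace BanachBimodule

variable {A X : Type u} [NonUnitalNormedRing A] [NormedSpace ℂ A]
  [NormedAddCommGroup X] [NormedSpace ℂ X]

/-- `D(ab) = D(a)·b + a·D(b)` -/
def IsDerivation (M : BanachBimodule A X) (D : A → X) : Prop :=
  ∀ a b, D (a * b) = M.rsmul b (D a) + M.lsmul a (D b)

/-- `D(ab + ba) = D(a)·b + a·D(b) + D(b)·a + b·D(a)` -/
def IsJordanDerivation (M : BanachBimodule A X) (D : A → X) : Prop :=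
  ∀ a b, D (a * b + b * a) =
    M.rsmul b (D a) + M.lsmul a (D b) + M.rsmul a (D b) + M.lsmul b (D a)

/-- `D(ab − ba) = D(a)·b + a·D(b) − D(b)·a − b·D(a)` -/
def IsLieDerivation (M : BanachBimodule A X) (D : A → X) : Prop :=
  ∀ a b, D (a * b - b * a) =
    M.rsmul b (D a) + M.lsmul a (D b) - M.rsmul a (D b) - M.lsmul b (D a)

/-- the center `Z_𝔘(X) = {x ∈ X | a·x = x·a for all a ∈ 𝔘}` -/
def center (M : BanachBimodule A X) : Set X := {x | ∀ a, M.lsmul a x = M.rsmul a x}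

/-- the left action extended to the `ℓ¹`-unitization `𝔘♯`, via `1 • x = x` -/
noncomputable def uLsmul (M : BanachBimodule A X) (a : WithLp 1 (Unitization ℂ A)) (x : X) : X :=
  (WithLp.equiv 1 (Unitization ℂ A) a).fst • x + M.lsmul ((WithLp.equiv 1 (Unitization ℂ A)) a).snd x

/-- the right action extended to the `ℓ¹`-unitization `𝔘♯`, via `x • 1 = x` -/
noncomputable def uRsmul (M : BanachBimodule A X) (a : WithLp 1 (Unitization ℂ A)) (x : X) : X :=
  (WithLp.equiv 1 (Unitization ℂ A) a).fst • x + M.rsmul ((WithLp.equiv 1 (Unitization ℂ A)) a).snd x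

end BanachBimodule


set_option linter.unusedSectionVars false

section Part1


variable {A X : Type u} [NonUnitalNormedRing A] [NormedSpace ℂ A]
    [IsScalarTower ℂ A A] [SMulCommClass ℂ A A] [CompleteSpace A]
    [NormedAddCommGroup X] [NormedSpace ℂ X] [CompleteSpace X]

local notation "𝔸" => WithLp 1 (Unitization ℂ A)

/-- `fst` as a continuous linear map on the `ℓ¹`-unitization. -/
noncomputable def fstL : 𝔸 →L[ℂ] ℂ :=
  LinearMap.mkContinuous
    { toFun := fun v => (WithLp.equiv 1 (Unitization ℂ A) v).fst
      map_add' := fun v w => by simp [WithLp.ofLp_add]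
      map_smul' := fun c v => by simp [WithLp.ofLp_smul] }
    1 (fun v => by
      rw [one_mul, WithLp.unitization_norm_def]
      exact le_add_of_nonneg_right (norm_nonneg _))

/-- `snd` as a continuous linear map on the `ℓ¹`-unitization. -/
noncomputable def sndL : 𝔸 →L[ℂ] A :=
  LinearMap.mkContinuous
    { toFun := fun v => (WithLp.equiv 1 (Unitization ℂ A) v).snd
      map_add' := fun v w => by simp [WithLp.ofLp_add]
      map_smul' := fun c v => by simp [WithLp.ofLp_smul] }
    1 (fun v => by
      rw [one_mul, WithLp.unitization_norm_def]
      exact le_add_of_nonneg_left (norm_nonneg _))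

@[simp] lemma fstL_apply (v : 𝔸) : fstL v = (WithLp.equiv 1 (Unitization ℂ A) v).fst := rfl
@[simp] lemma sndL_apply (v : 𝔸) : sndL v = (WithLp.equiv 1 (Unitization ℂ A) v).snd := rfl

lemma e_mul_fst (v w : 𝔸) :
    (WithLp.equiv 1 (Unitization ℂ A) (v * w)).fst =
      (WithLp.equiv 1 (Unitization ℂ A) v).fst * (WithLp.equiv 1 (Unitization ℂ A) w).fst := by
  exact Unitization.fst_mul _ _

lemma e_mul_snd (v w : 𝔸) :
    (WithLp.equiv 1 (Unitization ℂ A) (v * w)).snd =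
      (WithLp.equiv 1 (Unitization ℂ A) v).fst • (WithLp.equiv 1 (Unitization ℂ A) w).snd
      + (WithLp.equiv 1 (Unitization ℂ A) w).fst • (WithLp.equiv 1 (Unitization ℂ A) v).snd
      + (WithLp.equiv 1 (Unitization ℂ A) v).snd * (WithLp.equiv 1 (Unitization ℂ A) w).snd := by
  exact Unitization.snd_mul _ _

lemma e_one_fst : (WithLp.equiv 1 (Unitization ℂ A) (1 : 𝔸)).fst = 1 := Unitization.fst_one
lemma e_one_snd : (WithLp.equiv 1 (Unitization ℂ A) (1 : 𝔸)).snd = 0 := Unitization.snd_one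

/-- embedding of `A` into its `ℓ¹` unitization -/
noncomputable def jA (a : A) : 𝔸 :=
  (WithLp.equiv 1 (Unitization ℂ A)).symm (Unitization.inr a)

@[simp] lemma jA_fst (a : A) : (WithLp.equiv 1 (Unitization ℂ A) (jA a)).fst = 0 := by
  simp [jA]

@[simp] lemma jA_snd (a : A) : (WithLp.equiv 1 (Unitization ℂ A) (jA a)).snd = a := by
  simp [jA]

lemma jA_norm (a : A) : ‖jA a‖ = ‖a‖ := WithLp.unitization_norm_inr a

lemma jA_mul (a b : A) : jA (a * b) = jA a * jA b := by
  apply (WithLp.equiv 1 (Unitization ℂ A)).injective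
  simp [jA, Unitization.inr_mul, WithLp.unitization_mul]

namespace BanachBimodule

variable (M : BanachBimodule A X)

/-- the left action of the unitization, as a continuous bilinear map -/
noncomputable def uLb : 𝔸 →L[ℂ] X →L[ℂ] X :=
  (fstL.smulRight (ContinuousLinearMap.id ℂ X)) + M.lsmul.comp sndL

/-- the right action of the unitization, as a continuous bilinear map -/
noncomputable def uRb : 𝔸 →L[ℂ] X →L[ℂ] X :=
  (fstL.smulRight (ContinuousLinearMap.id ℂ X)) + M.rsmul.comp sndL

lemma uLb_apply (v : 𝔸) (x : X) :
    M.uLb v x = (WithLp.equiv 1 (Unitization ℂ A) v).fst • x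
      + M.lsmul (WithLp.equiv 1 (Unitization ℂ A) v).snd x := rfl

lemma uRb_apply (v : 𝔸) (x : X) :
    M.uRb v x = (WithLp.equiv 1 (Unitization ℂ A) v).fst • x
      + M.rsmul (WithLp.equiv 1 (Unitization ℂ A) v).snd x := rfl

lemma uLb_eq_uLsmul (v : 𝔸) (x : X) : M.uLb v x = M.uLsmul v x := rfl
lemma uRb_eq_uRsmul (v : 𝔸) (x : X) : M.uRb v x = M.uRsmul v x := rfl

@[simp] lemma uLb_one (x : X) : M.uLb 1 x = x := by
  rw [uLb_apply, e_one_fst, e_one_snd]; simp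

@[simp] lemma uRb_one (x : X) : M.uRb 1 x = x := by
  rw [uRb_apply, e_one_fst, e_one_snd]; simp

lemma uLb_jA (a : A) (x : X) : M.uLb (jA a) x = M.lsmul a x := by
  rw [uLb_apply, jA_fst, jA_snd]; simp

lemma uRb_jA (a : A) (x : X) : M.uRb (jA a) x = M.rsmul a x := by
  rw [uRb_apply, jA_fst, jA_snd]; simp

lemma uLb_mul (v w : 𝔸) (x : X) : M.uLb (v * w) x = M.uLb v (M.uLb w x) := by
  simp only [uLb_apply, e_mul_fst, e_mul_snd, map_add, map_smul, M.lsmul_mul,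
    ContinuousLinearMap.add_apply, ContinuousLinearMap.smul_apply, map_add,
    smul_add, mul_smul]
  module

lemma uRb_mul (v w : 𝔸) (x : X) : M.uRb (v * w) x = M.uRb w (M.uRb v x) := by
  simp only [uRb_apply, e_mul_fst, e_mul_snd, map_add, map_smul, M.rsmul_mul,
    ContinuousLinearMap.add_apply, ContinuousLinearMap.smul_apply, map_add,
    smul_add, mul_smul, mul_comm]
  module

lemma uLb_uRb_comm (v w : 𝔸) (x : X) : M.uLb v (M.uRb w x) = M.uRb w (M.uLb v x) := by
  simp only [uLb_apply, uRb_apply, map_add, map_smul, smul_add, M.lsmul_rsmul,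
    smul_comm ((WithLp.equiv 1 (Unitization ℂ A)) v).fst]
  module

end BanachBimodule

end Part1

section Part2

namespace ProjTensorSquare

variable {B : Type u} [NonUnitalNormedRing B] [NormedSpace ℂ B]
    [IsScalarTower ℂ B B] [SMulCommClass ℂ B B] [CompleteSpace B]
variable (P : ProjTensorSquare B)

/-- Two continuous linear maps agreeing on elementary tensors agree everywhere. -/
lemma ext_apply {Y : Type*} [NormedAddCommGroup Y] [NormedSpace ℂ Y]
    {F G : P.T →L[ℂ] Y} (h : ∀ u v, F (P.tmul u v) = G (P.tmul u v)) (s : P.T) :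
    F s = G s := by
  obtain ⟨u, v, -, hsum, -⟩ := P.exists_rep s 1 one_pos
  have h2 := hsum.mapL G
  rw [show (fun n => G (P.tmul (u n) (v n))) = (fun n => F (P.tmul (u n) (v n)))
    from funext fun n => (h _ _).symm] at h2
  exact (hsum.mapL F).unique h2

variable {X : Type u} [NormedAddCommGroup X] [NormedSpace ℂ X] [CompleteSpace X]

/-- a chosen lift of a bounded bilinear map -/
noncomputable def plift (f : B →L[ℂ] B →L[ℂ] X) : P.T →L[ℂ] X := (P.lift f).choose

@[simp] lemma plift_tmul (f : B →L[ℂ] B →L[ℂ] X) (a b : B) :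
    P.plift f (P.tmul a b) = f a b := (P.lift f).choose_spec.1 a b

lemma plift_norm (f : B →L[ℂ] B →L[ℂ] X) : ‖P.plift f‖ ≤ ‖f‖ := (P.lift f).choose_spec.2

variable (v : B)

lemma lcirc_flip (s : P.T) : P.lcirc v (P.flip s) = P.flip (P.lmul v s) := by
  refine P.ext_apply (F := (P.lcirc v).comp P.flip) (G := P.flip.comp (P.lmul v))
    (fun u w => ?_) s
  simp [P.flip_tmul, P.lcirc_tmul, P.lmul_tmul]

lemma rcirc_flip (s : P.T) : P.rcirc v (P.flip s) = P.flip (P.rmul v s) := by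
  refine P.ext_apply (F := (P.rcirc v).comp P.flip) (G := P.flip.comp (P.rmul v))
    (fun u w => ?_) s
  simp [P.flip_tmul, P.rcirc_tmul, P.rmul_tmul]

end ProjTensorSquare

/-- bilinear map `(u, v) ↦ h u (k v)` -/
noncomputable def bil2 {E X : Type u} [NormedAddCommGroup E] [NormedSpace ℂ E]
    [NormedAddCommGroup X] [NormedSpace ℂ X]
    (h : E →L[ℂ] X →L[ℂ] X) (k : E →L[ℂ] X) : E →L[ℂ] E →L[ℂ] X :=
  ((ContinuousLinearMap.compL ℂ E X X).flip k).comp h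

@[simp] lemma bil2_apply {E X : Type u} [NormedAddCommGroup E] [NormedSpace ℂ E]
    [NormedAddCommGroup X] [NormedSpace ℂ X]
    (h : E →L[ℂ] X →L[ℂ] X) (k : E →L[ℂ] X) (u v : E) :
    bil2 h k u v = h u (k v) := rfl

variable {A X : Type u} [NonUnitalNormedRing A] [NormedSpace ℂ A]
    [IsScalarTower ℂ A A] [SMulCommClass ℂ A A] [CompleteSpace A]
    [NormedAddCommGroup X] [NormedSpace ℂ X] [CompleteSpace X]

local notation "𝔸" => WithLp 1 (Unitization ℂ A)

variable (P : ProjTensorSquare (WithLp 1 (Unitization ℂ A))) (M : BanachBimodule A X)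

/-- the operator `ψ_x : T → X` -/
noncomputable def Hmap (x : X) : P.T →L[ℂ] X := P.plift (bil2 M.uLb (M.uRb.flip x))

lemma Hmap_tmul (x : X) (u v : 𝔸) :
    Hmap P M x (P.tmul u v) = M.uLb u (M.uRb v x) := by
  simp [Hmap]

lemma Hmap_norm (x : X) (s : P.T) :
    ‖Hmap P M x s‖ ≤ ‖M.uLb‖ * (‖M.uRb‖ * ‖x‖) * ‖s‖ := by
  have h1 : ‖bil2 M.uLb (M.uRb.flip x)‖ ≤ ‖M.uLb‖ * (‖M.uRb‖ * ‖x‖) := by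
    refine ContinuousLinearMap.opNorm_le_bound _ ?_ fun u => ?_
    · positivity
    refine ContinuousLinearMap.opNorm_le_bound _ ?_ fun w => ?_
    · positivity
    calc ‖bil2 M.uLb (M.uRb.flip x) u w‖ = ‖M.uLb u (M.uRb w x)‖ := rfl
      _ ≤ ‖M.uLb‖ * ‖u‖ * ‖M.uRb w x‖ := M.uLb.le_opNorm₂ u _
      _ ≤ ‖M.uLb‖ * ‖u‖ * (‖M.uRb‖ * ‖w‖ * ‖x‖) := by
          gcongr
          exact M.uRb.le_opNorm₂ w x
      _ = ‖M.uLb‖ * (‖M.uRb‖ * ‖x‖) * ‖u‖ * ‖w‖ := by ring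
  exact ContinuousLinearMap.le_of_opNorm_le _ ((P.plift_norm _).trans h1) s

lemma Hmap_add (x y : X) (s : P.T) :
    Hmap P M (x + y) s = Hmap P M x s + Hmap P M y s := by
  refine P.ext_apply (F := Hmap P M (x + y)) (G := Hmap P M x + Hmap P M y)
    (fun u v => ?_) s
  simp [Hmap_tmul]

lemma Hmap_sub (x y : X) (s : P.T) :
    Hmap P M (x - y) s = Hmap P M x s - Hmap P M y s := by
  refine P.ext_apply (F := Hmap P M (x - y)) (G := Hmap P M x - Hmap P M y)
    (fun u v => ?_) s
  simp [Hmap_tmul]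

lemma Hmap_smul (c : ℂ) (x : X) (s : P.T) :
    Hmap P M (c • x) s = c • Hmap P M x s := by
  refine P.ext_apply (F := Hmap P M (c • x)) (G := c • Hmap P M x)
    (fun u v => ?_) s
  simp [Hmap_tmul]

lemma Hmap_uLb (v : 𝔸) (x : X) (s : P.T) :
    Hmap P M (M.uLb v x) s = Hmap P M x (P.rcirc v s) := by
  refine P.ext_apply (F := Hmap P M (M.uLb v x)) (G := (Hmap P M x).comp (P.rcirc v))
    (fun u w => ?_) s
  simp only [ContinuousLinearMap.comp_apply, Hmap_tmul, P.rcirc_tmul, Hmap_tmul]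
  rw [M.uLb_mul]
  simp only [M.uLb_uRb_comm]

lemma Hmap_uRb (v : 𝔸) (x : X) (s : P.T) :
    Hmap P M (M.uRb v x) s = Hmap P M x (P.lcirc v s) := by
  refine P.ext_apply (F := Hmap P M (M.uRb v x)) (G := (Hmap P M x).comp (P.lcirc v))
    (fun u w => ?_) s
  simp only [ContinuousLinearMap.comp_apply, Hmap_tmul, P.lcirc_tmul, Hmap_tmul]
  rw [M.uRb_mul]

lemma uLb_Hmap (c : 𝔸) (x : X) (s : P.T) :
    M.uLb c (Hmap P M x s) = Hmap P M x (P.lmul c s) := by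
  refine P.ext_apply (F := (M.uLb c).comp (Hmap P M x)) (G := (Hmap P M x).comp (P.lmul c))
    (fun u w => ?_) s
  simp only [ContinuousLinearMap.comp_apply, Hmap_tmul, P.lmul_tmul, Hmap_tmul]
  rw [M.uLb_mul]

lemma uRb_Hmap (c : 𝔸) (x : X) (s : P.T) :
    M.uRb c (Hmap P M x s) = Hmap P M x (P.rmul c s) := by
  refine P.ext_apply (F := (M.uRb c).comp (Hmap P M x)) (G := (Hmap P M x).comp (P.rmul c))
    (fun u w => ?_) s
  simp only [ContinuousLinearMap.comp_apply, Hmap_tmul, P.rmul_tmul, Hmap_tmul]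
  rw [M.uRb_mul]
  simp only [M.uLb_uRb_comm]

variable (D : A →L[ℂ] X)

/-- `D` extended to the unitization (killing the unit) -/
noncomputable def Dt : 𝔸 →L[ℂ] X := D.comp sndL

lemma Dt_apply (v : 𝔸) : Dt D v = D ((WithLp.equiv 1 (Unitization ℂ A) v).snd) := rfl

@[simp] lemma Dt_jA (a : A) : Dt D (jA a) = D a := by rw [Dt_apply, jA_snd]

/-- the operator `Φ_D : T → X` -/
noncomputable def Phi : P.T →L[ℂ] X := P.plift (bil2 M.uLb (Dt D))

lemma Phi_tmul (u v : 𝔸) : Phi P M D (P.tmul u v) = M.uLb u (Dt D v) := by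
  simp [Phi]

lemma DtLie (hD : M.IsLieDerivation D) (v w : 𝔸) :
    Dt D (v * w - w * v) =
      M.uRb w (Dt D v) + M.uLb v (Dt D w) - M.uRb v (Dt D w) - M.uLb w (Dt D v) := by
  have hsnd : (WithLp.equiv 1 (Unitization ℂ A) (v * w - w * v)).snd =
      (WithLp.equiv 1 (Unitization ℂ A) v).snd * (WithLp.equiv 1 (Unitization ℂ A) w).snd
      - (WithLp.equiv 1 (Unitization ℂ A) w).snd * (WithLp.equiv 1 (Unitization ℂ A) v).snd := by
    show (WithLp.equiv 1 (Unitization ℂ A) (v * w) - WithLp.equiv 1 (Unitization ℂ A) (w * v)).snd = _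
    rw [sub_eq_add_neg, Unitization.snd_add, Unitization.snd_neg,
      e_mul_snd, e_mul_snd]
    abel
  simp only [Dt_apply, hsnd, hD ((WithLp.equiv 1 (Unitization ℂ A) v)).snd
    ((WithLp.equiv 1 (Unitization ℂ A) w)).snd, M.uRb_apply, M.uLb_apply]
  abel

/-- The main exact identity coming from the Lie derivation property. -/
lemma main_id (hD : M.IsLieDerivation D) (v : 𝔸) (s : P.T) :
    Hmap P M (Dt D v) s =
      Phi P M D (P.lcirc v s) - Phi P M D (P.rcirc v s)
      - Phi P M D (P.rmul v s) + Phi P M D (P.lmul v s)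
      - M.uLb v (Phi P M D s) + M.uRb v (Phi P M D s)
      + M.uLb (P.π s) (Dt D v) := by
  refine P.ext_apply (F := Hmap P M (Dt D v))
    (G := (Phi P M D).comp (P.lcirc v) - (Phi P M D).comp (P.rcirc v)
      - (Phi P M D).comp (P.rmul v) + (Phi P M D).comp (P.lmul v)
      - (M.uLb v).comp (Phi P M D) + (M.uRb v).comp (Phi P M D)
      + ((M.uLb).flip (Dt D v)).comp P.π)
    (fun u w => ?_) s
  simp only [ContinuousLinearMap.add_apply, ContinuousLinearMap.sub_apply,
    ContinuousLinearMap.comp_apply, ContinuousLinearMap.flip_apply,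
    Hmap_tmul, Phi_tmul, P.lcirc_tmul, P.rcirc_tmul, P.rmul_tmul, P.lmul_tmul, P.π_tmul]
  rw [M.uLb_mul u v, M.uLb_mul v u, M.uLb_mul u w]
  have h := DtLie M D hD v w
  rw [map_sub] at h
  rw [← M.uLb_uRb_comm u v, eq_add_of_sub_eq h]
  simp only [map_add, map_sub]
  abel

end Part2

section Part3

/-- A bounded net of complex numbers has a limit along any ultrafilter. -/
lemma exists_ulim {ι : Type*} (U : Ultrafilter ι) (g : ι → ℂ) (C : ℝ)
    (hg : ∀ i, ‖g i‖ ≤ C) : ∃ c : ℂ, Tendsto g (↑U) (𝓝 c) := by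
  have hle : (U.map g : Filter ℂ) ≤ 𝓟 (Metric.closedBall 0 C) := by
    rw [Filter.le_principal_iff]
    refine Filter.mem_map.mpr (Filter.univ_mem' fun i => ?_)
    simpa [Metric.mem_closedBall, dist_zero_right] using hg i
  obtain ⟨c, -, hc⟩ := (isCompact_closedBall (0 : ℂ) C).ultrafilter_le_nhds (U.map g) hle
  exact ⟨c, hc⟩

/-- Applying a continuous linear map to a null net. -/
lemma tendsto_clm_zero {Y Z : Type*} [NormedAddCommGroup Y] [NormedSpace ℂ Y]
    [NormedAddCommGroup Z] [NormedSpace ℂ Z] (F : Y →L[ℂ] Z) {ι : Type*} {l : Filter ι}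
    {z : ι → Y} (hz : Tendsto z l (𝓝 0)) : Tendsto (fun i => F (z i)) l (𝓝 0) := by
  simpa [Function.comp_def] using (F.continuous.tendsto 0).comp hz

end Part3

set_option maxHeartbeats 1000000
/-- Let `𝔘` be a Banach algebra whose `ℓ¹`-unitization `𝔘♯` is symmetrically
pseudo-amenable with a symmetric approximate diagonal `{t_λ}`.  Suppose `X` is a Banach
`𝔘`-bimodule such that for each `x ∈ X` the net `{ψ_x(t_λ)}` is bounded, and `D : 𝔘 → X` is a
bounded Lie derivation such that `{Φ_D(t_λ)}` is bounded.  Then there exist a bounded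
derivation `d : 𝔘 → X` and a bounded central trace `τ : 𝔘 → Z_𝔘(X)` with `D = d + τ`. -/
theorem lieDerivation_decomposition {A X : Type u} [NonUnitalNormedRing A] [NormedSpace ℂ A]
    [IsScalarTower ℂ A A] [SMulCommClass ℂ A A] [CompleteSpace A]
    [NormedAddCommGroup X] [NormedSpace ℂ X] [CompleteSpace X]
    (P : ProjTensorSquare (WithLp 1 (Unitization ℂ A))) (M : BanachBimodule A X)
    {ι : Type u} (l : Filter ι) [l.NeBot] (t : ι → P.T)
    (ht : P.IsSymmApproxDiagonal l t)
    (hψ : ∀ x : X, ∀ g : P.T →L[ℂ] X,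
      (∀ a b, g (P.tmul a b) = M.uLsmul a (M.uRsmul b x)) → ∃ C, ∀ i, ‖g (t i)‖ ≤ C)
    (D : A →L[ℂ] X) (hD : M.IsLieDerivation D)
    (hΦ : ∀ g : P.T →L[ℂ] X,
      (∀ a b, g (P.tmul a b) =
        M.uLsmul a (D ((WithLp.equiv 1 (Unitization ℂ A)) b).snd)) →
      ∃ C, ∀ i, ‖g (t i)‖ ≤ C) :
    ∃ (d : A →L[ℂ] X) (τ : A →L[ℂ] X), M.IsDerivation d ∧
      (∀ a, τ a ∈ M.center) ∧ (∀ a b : A, τ (a * b - b * a) = 0) ∧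
      ∀ a, D a = d a + τ a := by
  classical
  obtain ⟨hflip, hdiag, happrox⟩ := ht
  obtain ⟨i₀⟩ := Filter.nonempty_of_neBot l
  set U : Ultrafilter ι := Ultrafilter.of l with hUdef
  have hUl : (U : Filter ι) ≤ l := Ultrafilter.of_le l
  obtain ⟨CE, hCE⟩ := hΦ (Phi P M D) (fun a b => Phi_tmul P M D a b)
  have hCE0 : 0 ≤ CE := le_trans (norm_nonneg _) (hCE i₀)
  have hπ1 : Tendsto (fun i => P.π (t i)) l (𝓝 1) := by simpa using happrox 1
  have hπ0 : Tendsto (fun i => P.π (t i) - 1) l (𝓝 0) := by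
    simpa using hπ1.sub_const 1
  have hrcl : ∀ v, Tendsto (fun i => P.rcirc v (t i) - P.lcirc v (t i)) l (𝓝 0) := by
    intro v
    have heq : ∀ i, P.rcirc v (t i) - P.lcirc v (t i)
        = P.flip (P.rmul v (t i) - P.lmul v (t i)) := by
      intro i
      conv_lhs => rw [← hflip i]
      rw [P.rcirc_flip, P.lcirc_flip, ← map_sub]
    simp only [heq]
    have hd := (hdiag v).neg
    rw [neg_zero] at hd
    simp only [neg_sub] at hd
    exact tendsto_clm_zero P.flip hd
  have hcen : ∀ (x : X) (v : WithLp 1 (Unitization ℂ A)),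
      Tendsto (fun i => M.uLb v (Hmap P M x (t i)) - M.uRb v (Hmap P M x (t i))) l (𝓝 0) := by
    intro x v
    have heq : ∀ i, M.uLb v (Hmap P M x (t i)) - M.uRb v (Hmap P M x (t i))
        = Hmap P M x (P.lmul v (t i) - P.rmul v (t i)) := by
      intro i
      rw [uLb_Hmap, uRb_Hmap, ← map_sub]
    simp only [heq]
    exact tendsto_clm_zero (Hmap P M x) (hdiag v)
  have hρ : ∀ a : A, Tendsto
      (fun i => Hmap P M (D a) (t i)
        + (M.lsmul a (Phi P M D (t i)) - M.rsmul a (Phi P M D (t i)))) l (𝓝 (D a)) := by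
    intro a
    have heq : ∀ i, Hmap P M (D a) (t i)
        + (M.lsmul a (Phi P M D (t i)) - M.rsmul a (Phi P M D (t i)))
        = -(Phi P M D (P.rcirc (jA a) (t i) - P.lcirc (jA a) (t i)))
          + Phi P M D (P.lmul (jA a) (t i) - P.rmul (jA a) (t i))
          + M.uLb (P.π (t i)) (D a) := by
      intro i
      have h := main_id P M D hD (jA a) (t i)
      rw [Dt_jA, M.uLb_jA, M.uRb_jA] at h
      rw [h]
      simp only [map_sub]
      abel
    simp only [heq]
    have h3 : Tendsto (fun i => M.uLb (P.π (t i)) (D a)) l (𝓝 (D a)) := by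
      have hc := ((M.uLb.flip (D a)).continuous.tendsto 1).comp hπ1
      simpa [Function.comp_def] using hc
    have h1 := tendsto_clm_zero (Phi P M D) (hrcl (jA a))
    have h2 := tendsto_clm_zero (Phi P M D) (hdiag (jA a))
    simpa using (h1.neg.add h2).add h3
  -- existence of the limit defining τ₀
  have Ylim : ∀ a : A, ∃ z : X, Tendsto (fun i => Hmap P M (D a) (t i)) l (𝓝 z) := by
    intro a
    obtain ⟨Cy, hCy⟩ := hψ (D a) (Hmap P M (D a)) (fun u v => by rw [Hmap_tmul]; rfl)
    have hCy0 : 0 ≤ Cy := le_trans (norm_nonneg _) (hCy i₀)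
    set y : ι → X := fun i => Hmap P M (D a) (t i) with hydef
    set w : ι → X := fun i => D a
      - (y i + (M.lsmul a (Phi P M D (t i)) - M.rsmul a (Phi P M D (t i)))) with hwdef
    have hw : Tendsto w l (𝓝 0) := by
      have h := (hρ a).const_sub (D a)
      rw [sub_self] at h
      simpa only [hwdef, hydef] using h
    set Q : ι → (P.T →L[ℂ] X) := fun i =>
      Hmap P M (y i) - (M.uLb.flip (y i)).comp P.π with hQdef
    have hQapp : ∀ i s, Q i s = Hmap P M (y i) s - M.uLb (P.π s) (y i) := by
      intro i s
      simp only [hQdef, ContinuousLinearMap.sub_apply, ContinuousLinearMap.comp_apply,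
        ContinuousLinearMap.flip_apply]
    set κ : ℝ := ‖M.uLb‖ * (‖M.uRb‖ * Cy) + ‖M.uLb‖ * ‖P.π‖ * Cy with hκdef
    have hQbound : ∀ s i, ‖Q i s‖ ≤ κ * ‖s‖ := by
      intro s i
      rw [hQapp]
      calc ‖Hmap P M (y i) s - M.uLb (P.π s) (y i)‖
          ≤ ‖Hmap P M (y i) s‖ + ‖M.uLb (P.π s) (y i)‖ := norm_sub_le _ _
        _ ≤ ‖M.uLb‖ * (‖M.uRb‖ * ‖y i‖) * ‖s‖ + ‖M.uLb‖ * ‖P.π s‖ * ‖y i‖ :=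
            add_le_add (Hmap_norm P M _ s) (M.uLb.le_opNorm₂ _ _)
        _ ≤ ‖M.uLb‖ * (‖M.uRb‖ * Cy) * ‖s‖ + ‖M.uLb‖ * (‖P.π‖ * ‖s‖) * Cy := by
            refine add_le_add ?_ ?_
            · gcongr
              exact hCy i
            · gcongr
              · exact P.π.le_opNorm s
              · exact hCy i
        _ = κ * ‖s‖ := by rw [hκdef]; ring
    -- the key vanishing fact along the ultrafilter
    have keyf : ∀ f : X →L[ℂ] ℂ, ∀ s : P.T,
        Tendsto (fun i => f (Q i s)) (↑U) (𝓝 0) := by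
      intro f
      have hex : ∀ s : P.T, ∃ c : ℂ, Tendsto (fun i => f (Q i s)) (↑U) (𝓝 c) := by
        intro s
        refine exists_ulim U _ ((‖f‖ * κ) * ‖s‖) fun i => ?_
        calc ‖f (Q i s)‖ ≤ ‖f‖ * ‖Q i s‖ := f.le_opNorm _
          _ ≤ ‖f‖ * (κ * ‖s‖) := by gcongr; exact hQbound s i
          _ = (‖f‖ * κ) * ‖s‖ := by ring
      choose φ hφ using hex
      have hφadd : ∀ s s', φ (s + s') = φ s + φ s' := by
        intro s s'
        refine tendsto_nhds_unique (hφ (s + s')) ?_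
        have heq : (fun i => f (Q i (s + s'))) = fun i => f (Q i s) + f (Q i s') := by
          funext i; rw [map_add, map_add]
        rw [heq]
        exact (hφ s).add (hφ s')
      have hφsmul : ∀ (c : ℂ) (s : P.T), φ (c • s) = c • φ s := by
        intro c s
        refine tendsto_nhds_unique (hφ (c • s)) ?_
        have heq : (fun i => f (Q i (c • s))) = fun i => c • f (Q i s) := by
          funext i; rw [map_smul, map_smul]
        rw [heq]
        exact (hφ s).const_smul c
      have hφbound : ∀ s, ‖φ s‖ ≤ (‖f‖ * κ) * ‖s‖ := by
        intro s
        refine le_of_tendsto (hφ s).norm (Filter.Eventually.of_forall fun i => ?_)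
        calc ‖f (Q i s)‖ ≤ ‖f‖ * ‖Q i s‖ := f.le_opNorm _
          _ ≤ ‖f‖ * (κ * ‖s‖) := by gcongr; exact hQbound s i
          _ = (‖f‖ * κ) * ‖s‖ := by ring
      set Lφ : P.T →L[ℂ] ℂ := LinearMap.mkContinuous
        { toFun := φ, map_add' := hφadd, map_smul' := hφsmul } (‖f‖ * κ) hφbound with hLφdef
      have hzero : ∀ s, φ s = 0 := by
        have hz : ∀ s, Lφ s = (0 : P.T →L[ℂ] ℂ) s := by
          intro s
          refine P.ext_apply (fun u v => ?_) s
          have hQtm : ∀ i, Q i (P.tmul u v)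
              = M.uLb u (M.uRb v (y i) - M.uLb v (y i)) := by
            intro i
            rw [hQapp, Hmap_tmul, P.π_tmul, M.uLb_mul, ← map_sub]
          have h0 : Tendsto (fun i => M.uRb v (y i) - M.uLb v (y i)) l (𝓝 0) := by
            have h0' := (hcen (D a) v).neg
            simp only [neg_sub, neg_zero] at h0'
            simpa only [hydef] using h0'
          have hz1 : Tendsto (fun i => f (Q i (P.tmul u v))) (↑U) (𝓝 0) := by
            have h1 := tendsto_clm_zero (f.comp (M.uLb u)) h0
            simp only [ContinuousLinearMap.comp_apply] at h1
            have h2 : Tendsto (fun i => f (Q i (P.tmul u v))) l (𝓝 0) := by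
              simpa only [hQtm] using h1
            exact h2.mono_left hUl
          have := tendsto_nhds_unique (hφ (P.tmul u v)) hz1
          simpa [hLφdef] using this
        intro s
        simpa [hLφdef] using hz s
      intro s
      have h := hφ s
      rwa [hzero s] at h
    -- the quantitative Cauchy estimate
    set ε : ι → ℝ := fun μ => ‖M.uLb‖ * (‖P.π (t μ) - 1‖ * Cy)
      + ‖M.uLb‖ * (‖M.uRb‖ * CE) * ‖P.rcirc (jA a) (t μ) - P.lcirc (jA a) (t μ)‖ with hεdef
    have hε0 : ∀ μ, 0 ≤ ε μ := by
      intro μ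
      have h1 : (0:ℝ) ≤ ‖M.uLb‖ * (‖P.π (t μ) - 1‖ * Cy) :=
        mul_nonneg M.uLb.opNorm_nonneg (mul_nonneg (norm_nonneg _) hCy0)
      have h2 : (0:ℝ) ≤ ‖M.uLb‖ * (‖M.uRb‖ * CE)
          * ‖P.rcirc (jA a) (t μ) - P.lcirc (jA a) (t μ)‖ :=
        mul_nonneg (mul_nonneg M.uLb.opNorm_nonneg (mul_nonneg M.uRb.opNorm_nonneg hCE0))
          (norm_nonneg _)
      simp only [hεdef]
      exact add_nonneg h1 h2
    have hεlim : Tendsto ε l (𝓝 0) := by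
      have h1 : Tendsto (fun μ => ‖P.π (t μ) - 1‖) l (𝓝 0) := by simpa using hπ0.norm
      have h2 : Tendsto (fun μ => ‖P.rcirc (jA a) (t μ) - P.lcirc (jA a) (t μ)‖) l (𝓝 0) := by
        simpa using (hrcl (jA a)).norm
      have h := (((h1.mul_const Cy).const_mul ‖M.uLb‖).add
        (h2.const_mul (‖M.uLb‖ * (‖M.uRb‖ * CE))))
      simpa only [hεdef, mul_zero, zero_mul, add_zero, zero_add] using h
    have hest : ∀ μ ν, ‖y μ - y ν‖ ≤ ε μ + ε ν := by
      intro μ ν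
      refine NormedSpace.norm_le_dual_bound ℂ _ (add_nonneg (hε0 μ) (hε0 ν)) fun f => ?_
      obtain ⟨Lf, hLf⟩ := exists_ulim U (fun i => f (y i)) (‖f‖ * Cy)
        (fun i => (f.le_opNorm _).trans (by gcongr; exact hCy i))
      have hone : ∀ μ', ‖f (y μ') - Lf‖ ≤ ‖f‖ * ε μ' := by
        intro μ'
        -- the exact pointwise identity
        have hXd : ∀ i, y μ' = Q i (t μ') + M.uLb (P.π (t μ') - 1) (y i)
            + Hmap P M (Phi P M D (t i)) (P.rcirc (jA a) (t μ') - P.lcirc (jA a) (t μ'))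
            + Hmap P M (w i) (t μ') + y i := by
          intro i
          have hdec : D a = y i
              + (M.lsmul a (Phi P M D (t i)) - M.rsmul a (Phi P M D (t i))) + w i := by
            simp only [hwdef]; abel
          have e1 : y μ' = Hmap P M (D a) (t μ') := by rw [hydef]
          rw [e1, hdec, Hmap_add, Hmap_add, Hmap_sub]
          rw [← M.uLb_jA a (Phi P M D (t i)), ← M.uRb_jA a (Phi P M D (t i)),
            Hmap_uLb, Hmap_uRb, ← map_sub]
          have e2 : Hmap P M (y i) (t μ') = Q i (t μ') + M.uLb (P.π (t μ')) (y i) := by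
            rw [hQapp]; abel
          rw [e2]
          have e3 : M.uLb (P.π (t μ')) (y i) = M.uLb (P.π (t μ') - 1) (y i) + y i := by
            rw [map_sub, ContinuousLinearMap.sub_apply, M.uLb_one]
            abel
          rw [e3]
          abel
        have hid : ∀ i, f (y μ') - f (y i)
            = f (Q i (t μ')) + f (M.uLb (P.π (t μ') - 1) (y i))
              + f (Hmap P M (Phi P M D (t i))
                  (P.rcirc (jA a) (t μ') - P.lcirc (jA a) (t μ')))
              + f (Hmap P M (w i) (t μ')) := by
          intro i
          conv_lhs => rw [hXd i]
          simp only [map_add]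
          ring
        -- limits of the four terms
        have l1 : Tendsto (fun i => f (Q i (t μ'))) (↑U) (𝓝 0) := keyf f (t μ')
        have hb2 : ∀ i, ‖f (M.uLb (P.π (t μ') - 1) (y i))‖
            ≤ ‖f‖ * (‖M.uLb‖ * (‖P.π (t μ') - 1‖ * Cy)) := by
          intro i
          refine (f.le_opNorm _).trans ?_
          gcongr
          refine (M.uLb.le_opNorm₂ _ _).trans ?_
          rw [mul_assoc]
          gcongr
          exact hCy i
        obtain ⟨c2, hc2⟩ := exists_ulim U _ _ hb2
        have hc2n : ‖c2‖ ≤ ‖f‖ * (‖M.uLb‖ * (‖P.π (t μ') - 1‖ * Cy)) :=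
          le_of_tendsto hc2.norm (Filter.Eventually.of_forall hb2)
        have hb3 : ∀ i, ‖f (Hmap P M (Phi P M D (t i))
            (P.rcirc (jA a) (t μ') - P.lcirc (jA a) (t μ')))‖
            ≤ ‖f‖ * (‖M.uLb‖ * (‖M.uRb‖ * CE)
              * ‖P.rcirc (jA a) (t μ') - P.lcirc (jA a) (t μ')‖) := by
          intro i
          refine (f.le_opNorm _).trans ?_
          gcongr
          refine (Hmap_norm P M _ _).trans ?_
          gcongr
          exact hCE i
        obtain ⟨c3, hc3⟩ := exists_ulim U _ _ hb3
        have hc3n : ‖c3‖ ≤ ‖f‖ * (‖M.uLb‖ * (‖M.uRb‖ * CE)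
            * ‖P.rcirc (jA a) (t μ') - P.lcirc (jA a) (t μ')‖) :=
          le_of_tendsto hc3.norm (Filter.Eventually.of_forall hb3)
        have l4 : Tendsto (fun i => f (Hmap P M (w i) (t μ'))) (↑U) (𝓝 0) := by
          have hb4 : ∀ i, ‖f (Hmap P M (w i) (t μ'))‖
              ≤ ‖f‖ * (‖M.uLb‖ * (‖M.uRb‖ * ‖w i‖) * ‖t μ'‖) := by
            intro i
            refine (f.le_opNorm _).trans ?_
            gcongr
            exact Hmap_norm P M _ _
          have hg : Tendsto (fun i => ‖f‖ * (‖M.uLb‖ * (‖M.uRb‖ * ‖w i‖) * ‖t μ'‖)) l (𝓝 0) := by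
            have := (((hw.norm.const_mul ‖M.uRb‖).const_mul ‖M.uLb‖).mul_const
              ‖t μ'‖).const_mul ‖f‖
            simpa using this
          exact (squeeze_zero_norm hb4 hg).mono_left hUl
        have hsum : Tendsto (fun i => f (y μ') - f (y i)) (↑U) (𝓝 (0 + c2 + c3 + 0)) := by
          simp only [hid]
          exact ((l1.add hc2).add hc3).add l4
        have hsum' : Tendsto (fun i => f (y μ') - f (y i)) (↑U) (𝓝 (f (y μ') - Lf)) :=
          tendsto_const_nhds.sub hLf
        have hval : f (y μ') - Lf = c2 + c3 := by
          have := tendsto_nhds_unique hsum' hsum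
          rw [this]; ring
        rw [hval]
        calc ‖c2 + c3‖ ≤ ‖c2‖ + ‖c3‖ := norm_add_le _ _
          _ ≤ ‖f‖ * (‖M.uLb‖ * (‖P.π (t μ') - 1‖ * Cy))
              + ‖f‖ * (‖M.uLb‖ * (‖M.uRb‖ * CE)
                * ‖P.rcirc (jA a) (t μ') - P.lcirc (jA a) (t μ')‖) := add_le_add hc2n hc3n
          _ = ‖f‖ * ε μ' := by rw [hεdef]; ring
      calc ‖f (y μ - y ν)‖ = ‖(f (y μ) - Lf) - (f (y ν) - Lf)‖ := by
            rw [map_sub]; congr 1; ring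
        _ ≤ ‖f (y μ) - Lf‖ + ‖f (y ν) - Lf‖ := norm_sub_le _ _
        _ ≤ ‖f‖ * ε μ + ‖f‖ * ε ν := add_le_add (hone μ) (hone ν)
        _ = (ε μ + ε ν) * ‖f‖ := by ring
    have hC : Cauchy (Filter.map y l) := by
      refine Metric.cauchy_iff.mpr ⟨Filter.map_neBot, fun δ hδ => ?_⟩
      have hev : ∀ᶠ μ in l, ε μ < δ / 3 := hεlim.eventually_lt_const (by linarith)
      refine ⟨y '' {μ | ε μ < δ / 3}, Filter.image_mem_map hev, ?_⟩
      rintro _ ⟨μ, hμ, rfl⟩ _ ⟨ν, hν, rfl⟩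
      calc dist (y μ) (y ν) = ‖y μ - y ν‖ := dist_eq_norm _ _
        _ ≤ ε μ + ε ν := hest μ ν
        _ < δ / 3 + δ / 3 := add_lt_add hμ hν
        _ < δ := by linarith
    obtain ⟨z, hz⟩ := CompleteSpace.complete hC
    exact ⟨z, hz⟩
  choose τ0 hτ0 using Ylim
  have hEcomm : ∀ a : A, Tendsto
      (fun i => M.lsmul a (Phi P M D (t i)) - M.rsmul a (Phi P M D (t i)))
      l (𝓝 (D a - τ0 a)) := by
    intro a
    have h1 := (hρ a).sub (hτ0 a)
    simpa using h1
  have hadd : ∀ a b : A, τ0 (a + b) = τ0 a + τ0 b := by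
    intro a b
    refine tendsto_nhds_unique (hτ0 (a + b)) ?_
    have heq : (fun i => Hmap P M (D (a + b)) (t i))
        = fun i => Hmap P M (D a) (t i) + Hmap P M (D b) (t i) := by
      funext i; rw [map_add, Hmap_add]
    rw [heq]
    exact (hτ0 a).add (hτ0 b)
  have hsmul : ∀ (c : ℂ) (a : A), τ0 (c • a) = c • τ0 a := by
    intro c a
    refine tendsto_nhds_unique (hτ0 (c • a)) ?_
    have heq : (fun i => Hmap P M (D (c • a)) (t i))
        = fun i => c • Hmap P M (D a) (t i) := by
      funext i; rw [map_smul, Hmap_smul]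
    rw [heq]
    exact (hτ0 a).const_smul c
  have hbound : ∀ a : A, ‖τ0 a‖ ≤ (‖D‖ + (‖M.lsmul‖ + ‖M.rsmul‖) * CE) * ‖a‖ := by
    intro a
    have hdiff : ‖D a - τ0 a‖ ≤ (‖M.lsmul‖ + ‖M.rsmul‖) * CE * ‖a‖ := by
      refine le_of_tendsto (hEcomm a).norm (Filter.Eventually.of_forall fun i => ?_)
      calc ‖M.lsmul a (Phi P M D (t i)) - M.rsmul a (Phi P M D (t i))‖
          ≤ ‖M.lsmul a (Phi P M D (t i))‖ + ‖M.rsmul a (Phi P M D (t i))‖ := norm_sub_le _ _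
        _ ≤ ‖M.lsmul‖ * ‖a‖ * CE + ‖M.rsmul‖ * ‖a‖ * CE := by
            refine add_le_add ?_ ?_
            · refine (M.lsmul.le_opNorm₂ a _).trans ?_
              gcongr
              · exact hCE i
            · refine (M.rsmul.le_opNorm₂ a _).trans ?_
              gcongr
              · exact hCE i
        _ = (‖M.lsmul‖ + ‖M.rsmul‖) * CE * ‖a‖ := by ring
    calc ‖τ0 a‖ = ‖D a - (D a - τ0 a)‖ := by rw [sub_sub_cancel]
      _ ≤ ‖D a‖ + ‖D a - τ0 a‖ := norm_sub_le _ _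
      _ ≤ ‖D‖ * ‖a‖ + (‖M.lsmul‖ + ‖M.rsmul‖) * CE * ‖a‖ := by
          gcongr
          exact D.le_opNorm a
      _ = (‖D‖ + (‖M.lsmul‖ + ‖M.rsmul‖) * CE) * ‖a‖ := by ring
  set τ : A →L[ℂ] X := LinearMap.mkContinuous
    { toFun := τ0
      map_add' := hadd
      map_smul' := hsmul } (‖D‖ + (‖M.lsmul‖ + ‖M.rsmul‖) * CE) hbound with hτdef
  have hτapp : ∀ a, τ a = τ0 a := fun a => rfl
  refine ⟨D - τ, τ, ?_, ?_, ?_, ?_⟩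
  · -- derivation property
    intro a b
    have key : D (a * b) - τ0 (a * b)
        = M.rsmul b (D a - τ0 a) + M.lsmul a (D b - τ0 b) := by
      refine tendsto_nhds_unique (hEcomm (a * b)) ?_
      have heq : (fun i => M.lsmul (a * b) (Phi P M D (t i))
            - M.rsmul (a * b) (Phi P M D (t i)))
          = fun i => M.rsmul b (M.lsmul a (Phi P M D (t i)) - M.rsmul a (Phi P M D (t i)))
            + M.lsmul a (M.lsmul b (Phi P M D (t i)) - M.rsmul b (Phi P M D (t i))) := by
        funext i
        rw [M.lsmul_mul, M.rsmul_mul, map_sub, map_sub, M.lsmul_rsmul]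
        abel
      rw [heq]
      exact (((M.rsmul b).continuous.tendsto _).comp (hEcomm a)).add
        (((M.lsmul a).continuous.tendsto _).comp (hEcomm b))
    simpa [ContinuousLinearMap.sub_apply, hτapp] using key
  · -- centrality
    intro a
    intro c
    have h1 : Tendsto (fun i => M.lsmul c (Hmap P M (D a) (t i))
        - M.rsmul c (Hmap P M (D a) (t i))) l (𝓝 0) := by
      have h := hcen (D a) (jA c)
      simpa only [M.uLb_jA, M.uRb_jA] using h
    have h2 : Tendsto (fun i => M.lsmul c (Hmap P M (D a) (t i))
        - M.rsmul c (Hmap P M (D a) (t i))) l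
        (𝓝 (M.lsmul c (τ0 a) - M.rsmul c (τ0 a))) :=
      (((M.lsmul c).continuous.tendsto _).comp (hτ0 a)).sub
        (((M.rsmul c).continuous.tendsto _).comp (hτ0 a))
    have h3 := tendsto_nhds_unique h2 h1
    rw [hτapp]
    exact sub_eq_zero.mp h3
  · -- trace property
    intro a b
    rw [hτapp]
    refine tendsto_nhds_unique (hτ0 (a * b - b * a)) ?_
    have heq : (fun i => Hmap P M (D (a * b - b * a)) (t i))
        = fun i => Hmap P M (D b) (P.rcirc (jA a) (t i) - P.lcirc (jA a) (t i))
          - Hmap P M (D a) (P.rcirc (jA b) (t i) - P.lcirc (jA b) (t i)) := by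
      funext i
      rw [hD a b, Hmap_sub, Hmap_sub, Hmap_add]
      rw [← M.uRb_jA b (D a), ← M.uLb_jA a (D b), ← M.uRb_jA a (D b), ← M.uLb_jA b (D a)]
      rw [Hmap_uRb, Hmap_uLb, Hmap_uRb, Hmap_uLb]
      rw [map_sub, map_sub]
      abel
    rw [heq]
    have hz := (tendsto_clm_zero (Hmap P M (D b)) (hrcl (jA a))).sub
      (tendsto_clm_zero (Hmap P M (D a)) (hrcl (jA b)))
    simpa using hz
  · -- the decomposition
    intro a
    simp [ContinuousLinearMap.sub_apply]
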